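/- Let Ω ⊆ ℝⁿ be an open bounded set, let p ≥ 2, and let σ : Ω × [0,∞) → ℝ satisfy (H1)–(H4). Let u, φ : ℝⁿ → ℝ be weakly differentiable functions whose gradients restricted to Ω belong to L²(Ω) ∩ L^p(Ω). Then the Gâteaux derivative of the Dirichlet energy F_σ at u in the direction φ exists and equals the weighted Dirichlet pairing: lim_{ε→0} (F_σ(u + εφ) − F_σ(u))/ε = ∫_Ω σ(x,|∇u(x)|) ∇u(x)·∇φ(x) dx. (Proposition 3.2.) -/

import Mathlib

open MeasureTheory Set Filter
open scoped RealInnerProductSpace Topology ENNReal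

lemma measurable_eval_nat : Measurable (fun q : (ℕ → ℝ) × ℕ => q.1 q.2) := by
  intro s hs
  have h : (fun q : (ℕ → ℝ) × ℕ => q.1 q.2) ⁻¹' s
      = ⋃ m : ℕ, ({q : (ℕ → ℝ) × ℕ | q.1 m ∈ s} ∩ {q | q.2 = m}) := by
    ext q
    simp only [mem_preimage, mem_iUnion, mem_inter_iff, mem_setOf_eq]
    exact ⟨fun h => ⟨q.2, h, rfl⟩, by rintro ⟨m, hm, rfl⟩; exact hm⟩
  rw [h]
  refine MeasurableSet.iUnion fun m => MeasurableSet.inter ?_ ?_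
  · exact ((measurable_pi_apply m).comp measurable_fst) hs
  · exact measurable_snd (measurableSet_singleton m)

section Caratheodory
variable {X : Type*} [MeasurableSpace X] {μ : Measure X}

/-- ceil approximation converges from the right -/
lemma tendsto_ceil_div {s : ℝ} (hs : 0 ≤ s) :
    Tendsto (fun k : ℕ => (⌈s * (k + 1)⌉₊ : ℝ) / (k + 1)) atTop (𝓝 s) := by
  have hle : ∀ k : ℕ, s ≤ (⌈s * (k + 1)⌉₊ : ℝ) / (k + 1) := by
    intro k
    rw [le_div_iff₀ (by positivity)]
    exact Nat.le_ceil _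
  have hge : ∀ k : ℕ, (⌈s * (k + 1)⌉₊ : ℝ) / (k + 1) ≤ s + 1 / (k + 1) := by
    intro k
    rw [div_le_iff₀ (by positivity)]
    have := (Nat.ceil_lt_add_one (by positivity : (0:ℝ) ≤ s * (k+1))).le
    calc (⌈s * (k + 1)⌉₊ : ℝ) ≤ s * (k+1) + 1 := this
      _ = (s + 1 / (k+1)) * (k+1) := by field_simp
  have h1 : Tendsto (fun k : ℕ => s + 1 / ((k : ℝ) + 1)) atTop (𝓝 (s + 0)) :=
    tendsto_const_nhds.add tendsto_one_div_add_atTop_nhds_zero_nat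
  rw [add_zero] at h1
  exact tendsto_of_tendsto_of_tendsto_of_le_of_le tendsto_const_nhds h1 hle hge

/-- Carathéodory: composition x ↦ σ x (v x) is a.e. measurable. -/
lemma aemeasurable_sigma_comp (σ : X → ℝ → ℝ)
    (hm : ∀ E : ℝ, 0 ≤ E → AEMeasurable (fun x => σ x E) μ)
    (hc : ∀ᵐ x ∂μ, ContinuousOn (fun E => σ x E) (Set.Ici 0))
    {v : X → ℝ} (hv : Measurable v) (hv0 : ∀ x, 0 ≤ v x) :
    AEMeasurable (fun x => σ x (v x)) μ := by
  -- measurable approximations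
  set S : ℕ → X → ℕ → ℝ := fun k x m => (hm ((m : ℝ) / (k + 1)) (by positivity)).mk _ x with hS
  have hSmeas : ∀ k, Measurable (fun x => S k x) := by
    intro k
    exact measurable_pi_iff.2 fun m => (hm ((m : ℝ) / (k + 1)) (by positivity)).measurable_mk
  have hSae : ∀ᵐ x ∂μ, ∀ k m : ℕ, S k x m = σ x ((m : ℝ) / (k + 1)) := by
    rw [ae_all_iff]; intro k; rw [ae_all_iff]; intro m
    exact ((hm ((m : ℝ) / (k + 1)) (by positivity)).ae_eq_mk).symm
  have hHmeas : ∀ k : ℕ, Measurable (fun x => S k x ⌈v x * (k + 1)⌉₊) := by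
    intro k
    exact measurable_eval_nat.comp
      ((hSmeas k).prodMk (Nat.measurable_ceil.comp ((hv.mul measurable_const))))
  refine aemeasurable_of_tendsto_metrizable_ae atTop (fun k => (hHmeas k).aemeasurable) ?_
  filter_upwards [hc, hSae] with x hcx hSx
  have heq : ∀ k : ℕ, S k x ⌈v x * (k + 1)⌉₊ = σ x ((⌈v x * (k + 1)⌉₊ : ℝ) / (k + 1)) := by
    intro k; exact hSx k _
  simp only [heq]
  have hcw : ContinuousWithinAt (fun E => σ x E) (Set.Ici 0) (v x) :=
    hcx (v x) (hv0 x)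
  refine hcw.tendsto.comp ?_
  refine tendsto_nhdsWithin_of_tendsto_nhds_of_eventually_within _ (tendsto_ceil_div (hv0 x)) ?_
  exact Eventually.of_forall fun k => mem_Ici.2 (by positivity)

end Caratheodory

section Prod
variable {X : Type*} [MeasurableSpace X] {μ : Measure X}

/-- Joint a.e.-measurability of `(x, ξ) ↦ σ x (max ξ 0)` on the product. -/
lemma aemeasurable_sigma_prod [SFinite μ] (σ : X → ℝ → ℝ)
    (hm : ∀ E : ℝ, 0 ≤ E → AEMeasurable (fun x => σ x E) μ)
    (hc : ∀ᵐ x ∂μ, ContinuousOn (fun E => σ x E) (Set.Ici 0)) :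
    AEMeasurable (fun q : X × ℝ => σ q.1 (max q.2 0)) (μ.prod volume) := by
  set S : ℕ → X → ℕ → ℝ := fun k x m => (hm ((m : ℝ) / (k + 1)) (by positivity)).mk _ x with hS
  have hSmeas : ∀ k, Measurable (fun x => S k x) := fun k =>
    measurable_pi_iff.2 fun m => (hm ((m : ℝ) / (k + 1)) (by positivity)).measurable_mk
  have hSae : ∀ᵐ x ∂μ, ∀ k m : ℕ, S k x m = σ x ((m : ℝ) / (k + 1)) := by
    rw [ae_all_iff]; intro k; rw [ae_all_iff]; intro m
    exact ((hm ((m : ℝ) / (k + 1)) (by positivity)).ae_eq_mk).symm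
  have hHmeas : ∀ k : ℕ, Measurable (fun q : X × ℝ => S k q.1 ⌈max q.2 0 * (k + 1)⌉₊) := by
    intro k
    exact measurable_eval_nat.comp
      (((hSmeas k).comp measurable_fst).prodMk
        (Nat.measurable_ceil.comp ((measurable_snd.max measurable_const).mul measurable_const)))
  refine aemeasurable_of_tendsto_metrizable_ae atTop (fun k => (hHmeas k).aemeasurable) ?_
  have hprod : ∀ᵐ q : X × ℝ ∂(μ.prod volume),
      (ContinuousOn (fun E => σ q.1 E) (Set.Ici 0) ∧
        ∀ k m : ℕ, S k q.1 m = σ q.1 ((m : ℝ) / (k + 1))) :=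
    Measure.quasiMeasurePreserving_fst.tendsto_ae.eventually (hc.and hSae)
  filter_upwards [hprod] with q hq
  obtain ⟨hcx, hSx⟩ := hq
  have s0 : (0:ℝ) ≤ max q.2 0 := le_max_right _ _
  simp only [fun k : ℕ => hSx k ⌈max q.2 0 * (k + 1)⌉₊]
  have hcw : ContinuousWithinAt (fun E => σ q.1 E) (Set.Ici 0) (max q.2 0) := hcx _ s0
  refine hcw.tendsto.comp ?_
  refine tendsto_nhdsWithin_of_tendsto_nhds_of_eventually_within _ (tendsto_ceil_div s0) ?_
  exact Eventually.of_forall fun k => mem_Ici.2 (by positivity)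

/-- a.e. strong measurability of `x ↦ ∫ ξ in 0..v x, σ x ξ * ξ`. -/
lemma aestronglyMeasurable_Q [SFinite μ] (σ : X → ℝ → ℝ)
    (hm : ∀ E : ℝ, 0 ≤ E → AEMeasurable (fun x => σ x E) μ)
    (hc : ∀ᵐ x ∂μ, ContinuousOn (fun E => σ x E) (Set.Ici 0))
    {v : X → ℝ} (hv : AEMeasurable v μ) (hv0 : ∀ x, 0 ≤ v x) :
    AEStronglyMeasurable (fun x => ∫ ξ in (0:ℝ)..v x, σ x ξ * ξ) μ := by
  -- replace v by a measurable representative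
  set v' : X → ℝ := fun x => max (hv.mk v x) 0 with hv'
  have hv'meas : Measurable v' := hv.measurable_mk.max measurable_const
  have hv'0 : ∀ x, 0 ≤ v' x := fun x => le_max_right _ _
  have hv'ae : v' =ᵐ[μ] v := by
    filter_upwards [hv.ae_eq_mk] with x hx
    show max (hv.mk v x) 0 = v x
    rw [← hx, max_eq_left (hv0 x)]
  have key : AEStronglyMeasurable (fun x => ∫ ξ in (0:ℝ)..v' x, σ x ξ * ξ) μ := by
    set F : X × ℝ → ℝ := fun q =>
      Set.indicator {q' : X × ℝ | 0 < q'.2 ∧ q'.2 ≤ v' q'.1}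
        (fun q' => σ q'.1 (max q'.2 0) * q'.2) q with hF
    have hFmeas : AEStronglyMeasurable F (μ.prod volume) := by
      have hset : MeasurableSet {q' : X × ℝ | 0 < q'.2 ∧ q'.2 ≤ v' q'.1} :=
        (measurableSet_lt measurable_const measurable_snd).inter
          (measurableSet_le measurable_snd (hv'meas.comp measurable_fst))
      exact (((aemeasurable_sigma_prod σ hm hc).mul measurable_snd.aemeasurable).indicator
        hset).aestronglyMeasurable
    have heq : (fun x => ∫ ξ in (0:ℝ)..v' x, σ x ξ * ξ) = fun x => ∫ ξ, F (x, ξ) := by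
      funext x
      have h1 : (fun ξ => F (x, ξ))
          = Set.indicator (Set.Ioc 0 (v' x)) (fun ξ => σ x ξ * ξ) := by
        funext ξ
        by_cases hξ : ξ ∈ Set.Ioc 0 (v' x)
        · have hmem : (x, ξ) ∈ {q' : X × ℝ | 0 < q'.2 ∧ q'.2 ≤ v' q'.1} := ⟨hξ.1, hξ.2⟩
          rw [hF]
          simp only [Set.indicator_of_mem hmem, Set.indicator_of_mem hξ,
            max_eq_left hξ.1.le]
        · have hmem : (x, ξ) ∉ {q' : X × ℝ | 0 < q'.2 ∧ q'.2 ≤ v' q'.1} := by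
            intro h; exact hξ ⟨h.1, h.2⟩
          rw [hF]
          simp only [Set.indicator_of_notMem hmem, Set.indicator_of_notMem hξ]
      rw [h1, intervalIntegral.integral_of_le (hv'0 x), ← integral_indicator measurableSet_Ioc]
    rw [heq]
    exact hFmeas.integral_prod_right'
  refine key.congr ?_
  filter_upwards [hv'ae] with x hx
  rw [hx]

end Prod
section Pointwise
variable {H : Type*} [NormedAddCommGroup H] [InnerProductSpace ℝ H]

lemma Qdiff_bound (g : ℝ → ℝ) (hgc : ContinuousOn g (Ici 0))
    {σu E₀ p' : ℝ} (hσu : 0 ≤ σu) (hE₀ : 0 < E₀) (hp' : 0 ≤ p')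
    (hub : ∀ E > (0:ℝ), g E ≤ σu * max 1 ((E/E₀) ^ p'))
    (hlb : ∀ E > (0:ℝ), 0 ≤ g E)
    {E₁ E₂ R : ℝ} (h1 : 0 ≤ E₁) (h2 : 0 ≤ E₂) (h1R : E₁ ≤ R) (h2R : E₂ ≤ R) :
    |(∫ ξ in (0:ℝ)..E₂, g ξ * ξ) - ∫ ξ in (0:ℝ)..E₁, g ξ * ξ|
      ≤ σu * max 1 ((R/E₀) ^ p') * R * |E₂ - E₁| := by
  have hgc' : ContinuousOn (fun ξ => g ξ * ξ) (Ici 0) := hgc.mul continuousOn_id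
  have hi : ∀ {E : ℝ}, 0 ≤ E → IntervalIntegrable (fun ξ => g ξ * ξ) volume 0 E := by
    intro E hE
    exact (hgc'.mono (by rw [uIcc_of_le hE]; exact Icc_subset_Ici_self)).intervalIntegrable
  rw [intervalIntegral.integral_interval_sub_left (hi h2) (hi h1)]
  have hC : (0:ℝ) ≤ σu * max 1 ((R/E₀) ^ p') :=
    mul_nonneg hσu (le_trans zero_le_one (le_max_left _ _))
  have hptwise : ∀ ξ ∈ Set.uIoc E₁ E₂, ‖g ξ * ξ‖ ≤ σu * max 1 ((R/E₀) ^ p') * R := by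
    intro ξ hξ
    have hξpos : 0 < ξ := lt_of_le_of_lt (le_min h1 h2) hξ.1
    have hξR : ξ ≤ R := le_trans hξ.2 (max_le h1R h2R)
    rw [Real.norm_eq_abs, abs_of_nonneg (mul_nonneg (hlb ξ hξpos) hξpos.le)]
    have hg : g ξ ≤ σu * max 1 ((R/E₀) ^ p') := by
      have hmax : max 1 ((ξ/E₀) ^ p') ≤ max 1 ((R/E₀) ^ p') :=
        max_le_max le_rfl (Real.rpow_le_rpow (by positivity) (by gcongr) hp')
      exact le_trans (hub ξ hξpos) (mul_le_mul_of_nonneg_left hmax hσu)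
    exact mul_le_mul hg hξR hξpos.le hC
  have hfin := intervalIntegral.norm_integral_le_of_norm_le_const hptwise
  rw [Real.norm_eq_abs] at hfin
  exact hfin

lemma Q_hasDerivAt (g : ℝ → ℝ) (hgc : ContinuousOn g (Ici 0))
    {σu E₀ p' : ℝ} (hσu : 0 ≤ σu) (hE₀ : 0 < E₀) (hp' : 0 ≤ p')
    (hub : ∀ E > (0:ℝ), g E ≤ σu * max 1 ((E/E₀) ^ p'))
    (hlb : ∀ E > (0:ℝ), 0 ≤ g E)
    (a b : H) :
    HasDerivAt (fun ε : ℝ => ∫ ξ in (0:ℝ)..‖a + ε • b‖, g ξ * ξ) (g ‖a‖ * ⟪a, b⟫) 0 := by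
  have hgc' : ContinuousOn (fun ξ => g ξ * ξ) (Ici 0) := hgc.mul continuousOn_id
  by_cases ha : a = 0
  · -- degenerate case: derivative is zero
    subst ha
    simp only [inner_zero_left, mul_zero, norm_zero, zero_add]
    rw [hasDerivAt_iff_tendsto]
    simp only [sub_zero, zero_smul, norm_zero, smul_zero, intervalIntegral.integral_same]
    have hev : ∀ᶠ ε : ℝ in 𝓝 0, |ε| * ‖b‖ ≤ E₀ := by
      have habs : Tendsto (fun ε : ℝ => |ε| * ‖b‖) (𝓝 0) (𝓝 0) :=
        (continuous_abs.mul continuous_const).tendsto' 0 0 (by simp)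
      exact (habs.eventually_lt_const hE₀).mono fun ε hε => hε.le
    refine squeeze_zero' (g := fun ε : ℝ => σu * ‖b‖^2 * |ε|)
      (Eventually.of_forall fun ε => by positivity)
      (hev.mono fun ε hεE => ?_) ?_
    · rcases eq_or_ne ε 0 with rfl | hε
      · simp
      · have hE2 : ‖ε • b‖ = |ε| * ‖b‖ := by rw [norm_smul, Real.norm_eq_abs]
        have hQb := Qdiff_bound g hgc hσu hE₀ hp' hub hlb
          (le_refl (0:ℝ)) (norm_nonneg (ε • b)) (norm_nonneg (ε • b)) (le_refl ‖ε • b‖)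
        rw [intervalIntegral.integral_same, sub_zero, sub_zero] at hQb
        have hmax1 : max 1 ((‖ε • b‖/E₀) ^ p') = 1 := by
          refine max_eq_left (Real.rpow_le_one (by positivity) ?_ hp')
          rw [div_le_one hE₀, hE2]
          exact hεE
        rw [hmax1, mul_one] at hQb
        have hQb2 : |∫ ξ in (0:ℝ)..‖ε • b‖, g ξ * ξ| ≤ σu * (|ε| * ‖b‖) * (|ε| * ‖b‖) := by
          calc |∫ ξ in (0:ℝ)..‖ε • b‖, g ξ * ξ| ≤ σu * ‖ε • b‖ * |‖ε • b‖| := hQb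
            _ = σu * (|ε| * ‖b‖) * (|ε| * ‖b‖) := by
                rw [abs_of_nonneg (norm_nonneg _), hE2]
        have hεpos : (0:ℝ) < |ε| := abs_pos.2 hε
        rw [Real.norm_eq_abs, Real.norm_eq_abs]
        calc |ε|⁻¹ * |∫ ξ in (0:ℝ)..‖ε • b‖, g ξ * ξ|
            ≤ |ε|⁻¹ * (σu * (|ε| * ‖b‖) * (|ε| * ‖b‖)) := by
              exact mul_le_mul_of_nonneg_left hQb2 (by positivity)
          _ = σu * ‖b‖^2 * |ε| := by field_simp
    · exact (continuous_const.mul continuous_abs).tendsto' 0 0 (by simp)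
  · have hna : 0 < ‖a‖ := norm_pos_iff.2 ha
    -- derivative of ε ↦ ‖a + ε • b‖ at 0
    have hsq : ∀ ε : ℝ, ‖b‖^2*ε^2 + (2*⟪a,b⟫*ε + ‖a‖^2) = ‖a + ε • b‖^2 := by
      intro ε
      rw [norm_add_sq_real, real_inner_smul_right, norm_smul]
      simp only [Real.norm_eq_abs, mul_pow, sq_abs]
      ring
    have hq : HasDerivAt (fun ε : ℝ => ‖b‖^2*ε^2 + (2*⟪a,b⟫*ε + ‖a‖^2)) (2*⟪a,b⟫) 0 := by
      have h1 := (hasDerivAt_pow 2 (0:ℝ)).const_mul (‖b‖^2)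
      have h2 := ((hasDerivAt_id (0:ℝ)).const_mul (2*⟪a,b⟫)).add_const (‖a‖^2)
      have h3 := h1.add h2
      exact h3.congr_deriv (by simp)
    have hN : HasDerivAt (fun ε : ℝ => ‖a + ε • b‖) (⟪a,b⟫ / ‖a‖) 0 := by
      have hq0 : ‖b‖^2*(0:ℝ)^2 + (2*⟪a,b⟫*0 + ‖a‖^2) = ‖a‖^2 := by ring
      have hne : ‖b‖^2*(0:ℝ)^2 + (2*⟪a,b⟫*0 + ‖a‖^2) ≠ 0 := by
        rw [hq0]; positivity
      have hs := (Real.hasDerivAt_sqrt hne).comp 0 hq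
      have hval : 1 / (2 * Real.sqrt (‖b‖^2*(0:ℝ)^2 + (2*⟪a,b⟫*0 + ‖a‖^2))) * (2*⟪a,b⟫)
          = ⟪a,b⟫ / ‖a‖ := by
        rw [hq0, Real.sqrt_sq hna.le]
        field_simp
      rw [hval] at hs
      have hfun : (fun ε : ℝ => ‖a + ε • b‖)
          = Real.sqrt ∘ (fun ε : ℝ => ‖b‖^2*ε^2 + (2*⟪a,b⟫*ε + ‖a‖^2)) := by
        funext ε
        show ‖a + ε • b‖ = Real.sqrt (‖b‖^2*ε^2 + (2*⟪a,b⟫*ε + ‖a‖^2))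
        rw [hsq ε, Real.sqrt_sq (norm_nonneg _)]
      rw [hfun]
      exact hs
    -- FTC part
    have hi : IntervalIntegrable (fun ξ => g ξ * ξ) volume 0 ‖a‖ :=
      (hgc'.mono (by rw [uIcc_of_le (norm_nonneg a)]; exact Icc_subset_Ici_self)).intervalIntegrable
    have hmeasAt : StronglyMeasurableAtFilter (fun ξ => g ξ * ξ) (𝓝 ‖a‖) volume :=
      (hgc'.mono Ioi_subset_Ici_self).stronglyMeasurableAtFilter isOpen_Ioi ‖a‖ hna
    have hcontAt : ContinuousAt (fun ξ => g ξ * ξ) ‖a‖ :=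
      (hgc'.mono Ioi_subset_Ici_self).continuousAt (Ioi_mem_nhds hna)
    have hQd : HasDerivAt (fun E => ∫ ξ in (0:ℝ)..E, g ξ * ξ) (g ‖a‖ * ‖a‖) ‖a‖ :=
      intervalIntegral.integral_hasDerivAt_right hi hmeasAt hcontAt
    have hQd' : HasDerivAt (fun E => ∫ ξ in (0:ℝ)..E, g ξ * ξ) (g ‖a‖ * ‖a‖) ‖a + (0:ℝ) • b‖ := by
      simpa using hQd
    have hcomp := hQd'.comp 0 hN
    have : g ‖a‖ * ‖a‖ * (⟪a,b⟫ / ‖a‖) = g ‖a‖ * ⟪a,b⟫ := by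
      field_simp
    rw [this] at hcomp
    exact hcomp


lemma Q_quotient_bound (g : ℝ → ℝ) (hgc : ContinuousOn g (Ici 0))
    {σu E₀ p' : ℝ} (hσu : 0 ≤ σu) (hE₀ : 0 < E₀) (hp' : 0 ≤ p')
    (hub : ∀ E > (0:ℝ), g E ≤ σu * max 1 ((E/E₀) ^ p'))
    (hlb : ∀ E > (0:ℝ), 0 ≤ g E)
    {a b : H} {ε : ℝ} (hε : ε ≠ 0) (hε1 : |ε| ≤ 1) :
    |((∫ ξ in (0:ℝ)..‖a + ε • b‖, g ξ * ξ) - ∫ ξ in (0:ℝ)..‖a‖, g ξ * ξ) / ε|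
      ≤ σu * max 1 (((‖a‖ + ‖b‖)/E₀) ^ p') * (‖a‖ + ‖b‖) * ‖b‖ := by
  have hE2R : ‖a + ε • b‖ ≤ ‖a‖ + ‖b‖ := by
    calc ‖a + ε • b‖ ≤ ‖a‖ + ‖ε • b‖ := norm_add_le _ _
      _ ≤ ‖a‖ + ‖b‖ := by
          rw [norm_smul, Real.norm_eq_abs]
          nlinarith [norm_nonneg b]
  have h1R : ‖a‖ ≤ ‖a‖ + ‖b‖ := le_add_of_nonneg_right (norm_nonneg b)
  have hQb := Qdiff_bound g hgc hσu hE₀ hp' hub hlb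
    (norm_nonneg a) (norm_nonneg (a + ε • b)) h1R hE2R
  have hC : 0 ≤ σu * max 1 (((‖a‖ + ‖b‖)/E₀) ^ p') * (‖a‖ + ‖b‖) := by
    have : (0:ℝ) ≤ max 1 (((‖a‖ + ‖b‖)/E₀) ^ p') := le_trans zero_le_one (le_max_left _ _)
    positivity
  have hdiff : |‖a + ε • b‖ - ‖a‖| ≤ |ε| * ‖b‖ := by
    calc |‖a + ε • b‖ - ‖a‖| ≤ ‖(a + ε • b) - a‖ := abs_norm_sub_norm_le _ _
      _ = |ε| * ‖b‖ := by
          rw [add_sub_cancel_left, norm_smul, Real.norm_eq_abs]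
  rw [abs_div, div_le_iff₀ (abs_pos.2 hε)]
  calc |(∫ ξ in (0:ℝ)..‖a + ε • b‖, g ξ * ξ) - ∫ ξ in (0:ℝ)..‖a‖, g ξ * ξ|
      ≤ σu * max 1 (((‖a‖ + ‖b‖)/E₀) ^ p') * (‖a‖ + ‖b‖) * |‖a + ε • b‖ - ‖a‖| := hQb
    _ ≤ σu * max 1 (((‖a‖ + ‖b‖)/E₀) ^ p') * (‖a‖ + ‖b‖) * (|ε| * ‖b‖) :=
        mul_le_mul_of_nonneg_left hdiff hC
    _ = σu * max 1 (((‖a‖ + ‖b‖)/E₀) ^ p') * (‖a‖ + ‖b‖) * ‖b‖ * |ε| := by ring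

lemma rpow_two_eq (s : ℝ) : s ^ (2:ℝ) = s * s := by
  rw [show (2:ℝ) = ((2:ℕ):ℝ) by norm_num, Real.rpow_natCast]; ring

lemma max_young {E₀ p' : ℝ} (hE₀ : 0 < E₀) (hp' : 0 ≤ p') {r t : ℝ} (hr : 0 ≤ r) (ht : 0 ≤ t)
    (htr : t ≤ r) :
    max 1 ((r/E₀) ^ p') * r * t
      ≤ (r ^ (2:ℝ) + t ^ (2:ℝ)) + (1/E₀ ^ p') * (r ^ (p'+2) + t ^ (p'+2)) := by
  have h2 : (0:ℝ) ≤ 1/E₀ ^ p' * (r ^ (p'+2) + t ^ (p'+2)) := by positivity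
  have h1 : (0:ℝ) ≤ r ^ (2:ℝ) + t ^ (2:ℝ) := by positivity
  rcases le_total ((r/E₀) ^ p') 1 with hle | hge
  · rw [max_eq_left hle, one_mul]
    have hrt : r * t ≤ r ^ (2:ℝ) + t ^ (2:ℝ) := by
      rw [rpow_two_eq, rpow_two_eq]
      nlinarith [sq_nonneg (r - t)]
    linarith
  · rw [max_eq_right hge]
    rcases eq_or_lt_of_le hr with h0 | hrpos
    · have hr0 : r = 0 := h0.symm
      have ht0 : t = 0 := le_antisymm (htr.trans_eq hr0) ht
      rw [hr0, ht0, mul_zero]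
      positivity
    · have key : (r/E₀) ^ p' * r * t ≤ 1/E₀ ^ p' * r ^ (p'+2) := by
        rw [Real.div_rpow hr hE₀.le]
        have hrp : r ^ (p'+2) = r ^ p' * r * r := by
          rw [Real.rpow_add hrpos, rpow_two_eq]; ring
        have hin : r ^ p' * r * t ≤ r ^ (p'+2) := by
          rw [hrp]
          exact mul_le_mul_of_nonneg_left htr (by positivity)
        calc r ^ p' / E₀ ^ p' * r * t = 1/E₀ ^ p' * (r ^ p' * r * t) := by ring
          _ ≤ 1/E₀ ^ p' * r ^ (p'+2) := mul_le_mul_of_nonneg_left hin (by positivity)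
      have : 1/E₀ ^ p' * r ^ (p'+2) ≤ 1/E₀ ^ p' * (r ^ (p'+2) + t ^ (p'+2)) := by
        have : (0:ℝ) ≤ t ^ (p'+2) := by positivity
        nlinarith [Real.rpow_nonneg hr (p'+2), le_of_lt (one_div_pos.2 (Real.rpow_pos_of_pos hE₀ p'))]
      linarith

end Pointwise

/-- The Dirichlet energy density `Q_σ(x,E) = ∫₀^E σ(x,ξ)·ξ dξ`. -/
noncomputable def dirichletDensity {n : ℕ}
    (σ : EuclideanSpace ℝ (Fin n) → ℝ → ℝ) (x : EuclideanSpace ℝ (Fin n)) (E : ℝ) : ℝ :=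
  ∫ ξ in (0:ℝ)..E, σ x ξ * ξ

/-- The Dirichlet energy `F_σ(u) = ∫_Ω Q_σ(x,|∇u(x)|) dx`. -/
noncomputable def dirichletEnergy {n : ℕ} (Ω : Set (EuclideanSpace ℝ (Fin n)))
    (σ : EuclideanSpace ℝ (Fin n) → ℝ → ℝ) (u : EuclideanSpace ℝ (Fin n) → ℝ) : ℝ :=
  ∫ x in Ω, dirichletDensity σ x ‖gradient u x‖

/-- **Gâteaux derivative of the Dirichlet energy** (Proposition 3.2):
`lim_{ε→0} (F_σ(u + εφ) − F_σ(u))/ε = ∫_Ω σ(x,|∇u|) ∇u·∇φ dx`. -/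
theorem gateaux_derivative_dirichlet_energy
    {n : ℕ} (Ω : Set (EuclideanSpace ℝ (Fin n)))
    (hΩo : IsOpen Ω) (hΩb : Bornology.IsBounded Ω)
    (p : ℝ) (hp : 2 ≤ p)
    (σ : EuclideanSpace ℝ (Fin n) → ℝ → ℝ)
    -- (H1) measurability in x
    (hσmeas : ∀ E : ℝ, 0 ≤ E → AEMeasurable (fun x => σ x E) (volume.restrict Ω))
    -- (H2) strict monotonicity of E ↦ σ(x,E)·E on (0,∞)
    (hσmono : ∀ᵐ x ∂(volume.restrict Ω), StrictMonoOn (fun E => σ x E * E) (Set.Ioi 0))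
    -- (H3) continuity of E ↦ σ(x,E) on [0,∞)
    (hσcont : ∀ᵐ x ∂(volume.restrict Ω), ContinuousOn (fun E => σ x E) (Set.Ici 0))
    -- (H4) two-sided growth bound with exponent p
    (hσgrowth : ∃ σl σu E₀ : ℝ, 0 < σl ∧ σl ≤ σu ∧ 0 < E₀ ∧
      ∀ᵐ x ∂(volume.restrict Ω), ∀ E > (0:ℝ),
        σl * (E / E₀) ^ (p - 2) ≤ σ x E ∧ σ x E ≤ σu * max 1 ((E / E₀) ^ (p - 2)))
    -- u and φ weakly differentiable with gradients in L²(Ω) ∩ L^p(Ω)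
    (u φ : EuclideanSpace ℝ (Fin n) → ℝ)
    (hu : Differentiable ℝ u) (hφ : Differentiable ℝ φ)
    (huL2 : MemLp (fun x => gradient u x) 2 (volume.restrict Ω))
    (huLp : MemLp (fun x => gradient u x) (ENNReal.ofReal p) (volume.restrict Ω))
    (hφL2 : MemLp (fun x => gradient φ x) 2 (volume.restrict Ω))
    (hφLp : MemLp (fun x => gradient φ x) (ENNReal.ofReal p) (volume.restrict Ω)) :
    Tendsto (fun ε : ℝ =>
        (dirichletEnergy Ω σ (fun x => u x + ε * φ x) - dirichletEnergy Ω σ u) / ε)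
      (𝓝[≠] 0)
      (𝓝 (∫ x in Ω, σ x ‖gradient u x‖ * ⟪gradient u x, gradient φ x⟫)) := by
  classical
  obtain ⟨σl, σu, E₀, hσl, hσlu, hE₀, hgrowth⟩ := hσgrowth
  set μ := volume.restrict Ω with hμdef
  set a : EuclideanSpace ℝ (Fin n) → EuclideanSpace ℝ (Fin n) := fun x => gradient u x with hadef
  set b : EuclideanSpace ℝ (Fin n) → EuclideanSpace ℝ (Fin n) := fun x => gradient φ x with hbdef
  have hp'0 : (0:ℝ) ≤ p - 2 := by linarith
  have hp_pos : (0:ℝ) < p := by linarith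
  have hσu0 : (0:ℝ) ≤ σu := le_trans hσl.le hσlu
  -- good set
  have hgood : ∀ᵐ x ∂μ, ContinuousOn (fun E => σ x E) (Set.Ici 0) ∧
      (∀ E > (0:ℝ), σ x E ≤ σu * max 1 ((E/E₀) ^ (p-2))) ∧
      (∀ E > (0:ℝ), 0 ≤ σ x E) := by
    filter_upwards [hσcont, hgrowth] with x hc hg
    refine ⟨hc, fun E hE => (hg E hE).2, fun E hE => ?_⟩
    have := (hg E hE).1
    have h0 : (0:ℝ) ≤ σl * (E / E₀) ^ (p - 2) :=
      mul_nonneg hσl.le (Real.rpow_nonneg (by positivity) _)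
    linarith
  -- gradient of u + ε φ
  have hgrad : ∀ (ε : ℝ) (x), gradient (fun y => u y + ε * φ y) x = a x + ε • b x := by
    intro ε x
    have hf : fderiv ℝ (fun y => u y + ε * φ y) x = fderiv ℝ u x + ε • fderiv ℝ φ x := by
      rw [show (fun y => u y + ε * φ y) = u + fun y => ε * φ y from rfl, fderiv_add (hu x) ((hφ x).const_mul ε), fderiv_const_mul (hφ x)]
    show (InnerProductSpace.toDual ℝ _).symm (fderiv ℝ (fun y => u y + ε * φ y) x) = _
    rw [hf, map_add, LinearIsometryEquiv.map_smul]
    rfl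
  -- integrability helpers
  have hIntSq : ∀ (w : EuclideanSpace ℝ (Fin n) → ℝ), MemLp w 2 μ → (∀ x, 0 ≤ w x) →
      Integrable (fun x => w x ^ (2:ℝ)) μ := by
    intro w hw hw0
    have h := hw.integrable_norm_rpow (by norm_num) (by norm_num)
    have heq : (fun x => ‖w x‖ ^ (2:ℝ≥0∞).toReal) = fun x => w x ^ (2:ℝ) := by
      funext x
      rw [Real.norm_eq_abs, abs_of_nonneg (hw0 x)]
      norm_num
    rwa [heq] at h
  have hofp0 : ENNReal.ofReal p ≠ 0 := by
    simp only [ne_eq, ENNReal.ofReal_eq_zero, not_le]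
    exact hp_pos
  have hIntP : ∀ (w : EuclideanSpace ℝ (Fin n) → ℝ), MemLp w (ENNReal.ofReal p) μ →
      (∀ x, 0 ≤ w x) → Integrable (fun x => w x ^ p) μ := by
    intro w hw hw0
    have h := hw.integrable_norm_rpow hofp0 ENNReal.ofReal_ne_top
    have heq : (fun x => ‖w x‖ ^ (ENNReal.ofReal p).toReal) = fun x => w x ^ p := by
      funext x
      rw [Real.norm_eq_abs, abs_of_nonneg (hw0 x), ENNReal.toReal_ofReal hp_pos.le]
    rwa [heq] at h
  -- measurability of Q compositions
  have hQmeas : ∀ (w : EuclideanSpace ℝ (Fin n) → EuclideanSpace ℝ (Fin n)),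
      AEStronglyMeasurable w μ →
      AEStronglyMeasurable (fun x => dirichletDensity σ x ‖w x‖) μ := by
    intro w hw
    have := aestronglyMeasurable_Q σ hσmeas hσcont hw.norm.aemeasurable
      (fun x => norm_nonneg (w x))
    exact this
  -- integrability of Q compositions
  have hQint : ∀ (w : EuclideanSpace ℝ (Fin n) → EuclideanSpace ℝ (Fin n)),
      MemLp w 2 μ → MemLp w (ENNReal.ofReal p) μ →
      Integrable (fun x => dirichletDensity σ x ‖w x‖) μ := by
    intro w hw2 hwp
    have hmeas := hQmeas w hw2.aestronglyMeasurable
    have hDint : Integrable (fun x => σu * ((‖w x‖ ^ (2:ℝ) + ‖w x‖ ^ (2:ℝ))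
        + (1/E₀ ^ (p-2)) * (‖w x‖ ^ p + ‖w x‖ ^ p))) μ := by
      refine Integrable.const_mul ?_ σu
      refine Integrable.add ?_ ?_
      · exact (hIntSq _ hw2.norm (fun x => norm_nonneg _)).add
          (hIntSq _ hw2.norm (fun x => norm_nonneg _))
      · exact ((hIntP _ hwp.norm (fun x => norm_nonneg _)).add
          (hIntP _ hwp.norm (fun x => norm_nonneg _))).const_mul _
    refine hDint.mono' hmeas ?_
    filter_upwards [hgood] with x hx
    have h0 := Qdiff_bound (fun E => σ x E) hx.1 hσu0 hE₀ hp'0 hx.2.1 hx.2.2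
      (le_refl (0:ℝ)) (norm_nonneg (w x)) (norm_nonneg (w x)) (le_refl ‖w x‖)
    rw [intervalIntegral.integral_same, sub_zero, sub_zero,
      abs_of_nonneg (norm_nonneg (w x))] at h0
    have h1 : σu * max 1 ((‖w x‖/E₀) ^ (p-2)) * ‖w x‖ * ‖w x‖
        ≤ σu * ((‖w x‖ ^ (2:ℝ) + ‖w x‖ ^ (2:ℝ))
            + (1/E₀ ^ (p-2)) * (‖w x‖ ^ p + ‖w x‖ ^ p)) := by
      have hy := max_young hE₀ hp'0 (norm_nonneg (w x)) (norm_nonneg (w x)) (le_refl ‖w x‖)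
      rw [sub_add_cancel] at hy
      calc σu * max 1 ((‖w x‖/E₀) ^ (p-2)) * ‖w x‖ * ‖w x‖
          = σu * (max 1 ((‖w x‖/E₀) ^ (p-2)) * ‖w x‖ * ‖w x‖) := by ring
        _ ≤ _ := mul_le_mul_of_nonneg_left hy hσu0
    rw [Real.norm_eq_abs]
    exact le_trans h0 h1
  -- the difference quotient family and the dominating function
  set F : ℝ → EuclideanSpace ℝ (Fin n) → ℝ := fun ε x =>
    (dirichletDensity σ x ‖a x + ε • b x‖ - dirichletDensity σ x ‖a x‖) / ε with hFdef
  set Gdom : EuclideanSpace ℝ (Fin n) → ℝ := fun x =>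
    σu * (((‖a x‖ + ‖b x‖) ^ (2:ℝ) + ‖b x‖ ^ (2:ℝ))
      + (1/E₀ ^ (p-2)) * ((‖a x‖ + ‖b x‖) ^ p + ‖b x‖ ^ p)) with hGdef
  have hmem2 : MemLp (fun x => ‖a x‖ + ‖b x‖) 2 μ := huL2.norm.add hφL2.norm
  have hmemp : MemLp (fun x => ‖a x‖ + ‖b x‖) (ENNReal.ofReal p) μ := huLp.norm.add hφLp.norm
  have hR0 : ∀ x, (0:ℝ) ≤ ‖a x‖ + ‖b x‖ := fun x => by positivity
  have hGdomInt : Integrable Gdom μ := by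
    refine Integrable.const_mul ?_ σu
    refine Integrable.add ?_ ?_
    · exact (hIntSq _ hmem2 hR0).add (hIntSq _ hφL2.norm (fun x => norm_nonneg _))
    · exact ((hIntP _ hmemp hR0).add (hIntP _ hφLp.norm (fun x => norm_nonneg _))).const_mul _
  have hFmeas : ∀ ε : ℝ, AEStronglyMeasurable (F ε) μ := by
    intro ε
    have h1 : AEStronglyMeasurable (fun x => dirichletDensity σ x ‖a x + ε • b x‖) μ :=
      hQmeas (fun x => a x + ε • b x)
        (huL2.aestronglyMeasurable.add (hφL2.aestronglyMeasurable.const_smul ε))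
    have h0 : AEStronglyMeasurable (fun x => dirichletDensity σ x ‖a x‖) μ :=
      hQmeas a huL2.aestronglyMeasurable
    have h2 : AEStronglyMeasurable (fun x =>
        (dirichletDensity σ x ‖a x + ε • b x‖ - dirichletDensity σ x ‖a x‖) / ε) μ :=
      ((h1.aemeasurable.sub h0.aemeasurable).div_const ε).aestronglyMeasurable
    exact h2
  have hevne : ∀ᶠ ε : ℝ in 𝓝[≠] 0, ε ≠ 0 :=
    eventually_mem_nhdsWithin.mono fun ε hε => hε
  have hev1 : ∀ᶠ ε : ℝ in 𝓝[≠] 0, |ε| ≤ 1 := by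
    have h := ((continuous_abs.tendsto' (0:ℝ) 0 (by simp)).eventually_lt_const
      (by norm_num : (0:ℝ) < 1)).mono fun ε hε => hε.le
    exact h.filter_mono nhdsWithin_le_nhds
  have hbound : ∀ᶠ ε : ℝ in 𝓝[≠] 0, ∀ᵐ x ∂μ, ‖F ε x‖ ≤ Gdom x := by
    filter_upwards [hevne, hev1] with ε hε0 hε1
    filter_upwards [hgood] with x hx
    have hq := Q_quotient_bound (fun E => σ x E) hx.1 hσu0 hE₀ hp'0 hx.2.1 hx.2.2
      (a := a x) (b := b x) hε0 hε1
    have hq' : ‖F ε x‖ ≤ σu * max 1 (((‖a x‖ + ‖b x‖)/E₀) ^ (p-2)) * (‖a x‖ + ‖b x‖) * ‖b x‖ := by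
      rw [Real.norm_eq_abs]
      exact hq
    refine le_trans hq' ?_
    have hy := max_young hE₀ hp'0 (hR0 x) (norm_nonneg (b x))
      (le_add_of_nonneg_left (norm_nonneg (a x)))
    rw [sub_add_cancel] at hy
    calc σu * max 1 (((‖a x‖ + ‖b x‖)/E₀) ^ (p-2)) * (‖a x‖ + ‖b x‖) * ‖b x‖
        = σu * (max 1 (((‖a x‖ + ‖b x‖)/E₀) ^ (p-2)) * (‖a x‖ + ‖b x‖) * ‖b x‖) := by ring
      _ ≤ Gdom x := mul_le_mul_of_nonneg_left hy hσu0
  have hlim : ∀ᵐ x ∂μ, Tendsto (fun ε => F ε x) (𝓝[≠] 0)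
      (𝓝 (σ x ‖a x‖ * ⟪a x, b x⟫)) := by
    filter_upwards [hgood] with x hx
    have hder := Q_hasDerivAt (fun E => σ x E) hx.1 hσu0 hE₀ hp'0 hx.2.1 hx.2.2 (a x) (b x)
    have ht := hasDerivAt_iff_tendsto_slope.1 hder
    refine ht.congr fun ε => ?_
    rw [slope_def_field, sub_zero]
    have hf0 : ‖a x + (0:ℝ) • b x‖ = ‖a x‖ := by simp
    rw [hf0]
    rfl
  have hDCT := MeasureTheory.tendsto_integral_filter_of_dominated_convergence (μ := μ)
    (F := F) (f := fun x => σ x ‖a x‖ * ⟪a x, b x⟫) Gdom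
    (Eventually.of_forall hFmeas) hbound hGdomInt hlim
  have heq : ∀ᶠ ε : ℝ in 𝓝[≠] 0,
      (∫ x, F ε x ∂μ) =
      (dirichletEnergy Ω σ (fun x => u x + ε * φ x) - dirichletEnergy Ω σ u) / ε := by
    filter_upwards [hevne] with ε hε0
    have hrw : dirichletEnergy Ω σ (fun x => u x + ε * φ x)
        = ∫ x, dirichletDensity σ x ‖a x + ε • b x‖ ∂μ := by
      rw [dirichletEnergy]
      refine integral_congr_ae (Eventually.of_forall fun x => ?_)
      show dirichletDensity σ x ‖gradient (fun y => u y + ε * φ y) x‖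
          = dirichletDensity σ x ‖a x + ε • b x‖
      rw [hgrad ε x]
    have hrw0 : dirichletEnergy Ω σ u = ∫ x, dirichletDensity σ x ‖a x‖ ∂μ := rfl
    have h1 : Integrable (fun x => dirichletDensity σ x ‖a x + ε • b x‖) μ :=
      hQint _ (huL2.add (hφL2.const_smul ε)) (huLp.add (hφLp.const_smul ε))
    have h0 : Integrable (fun x => dirichletDensity σ x ‖a x‖) μ := hQint _ huL2 huLp
    rw [hrw, hrw0, ← integral_sub h1 h0, ← integral_div]
  exact Tendsto.congr' heq hDCT
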